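/- arXiv:1501.05681 — 2 statements merged into one kernel-verified Lean document; each statement's English description precedes it below -/
import Mathlib

section
/- A lattice polytope Δ containing the origin in its interior is reflexive if and only if both Δ and Δ* are canonical polytopes. Equivalently, the good pairs (Δ₁, Δ₂) with Δ₁ = Δ₂ are exactly the reflexive polytopes. -/
open Finset

variable {d : ℕ}

noncomputable section

/-- The standard pairing on `ℝ^d`. -/
def pairR (x y : Fin d → ℝ) : ℝ := ∑ i, x i * y i

/-- The polar of a subset of `ℝ^d`. -/
def polar (Δ : Set (Fin d → ℝ)) : Set (Fin d → ℝ) :=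
  {y | ∀ x ∈ Δ, pairR x y ≥ -1}

/-- A point of the standard lattice `ℤ^d ⊆ ℝ^d`. -/
def IsLatticePt (x : Fin d → ℝ) : Prop := ∀ i, ∃ z : ℤ, x i = (z : ℝ)

/-- A polytope: the convex hull of finitely many points. -/
def IsPolytope (Δ : Set (Fin d → ℝ)) : Prop :=
  ∃ S : Finset (Fin d → ℝ), Δ = convexHull ℝ (S : Set (Fin d → ℝ))

/-- A lattice polytope: the convex hull of finitely many lattice points. -/
def IsLatticePolytope (Δ : Set (Fin d → ℝ)) : Prop :=
  ∃ S : Finset (Fin d → ℝ), (∀ x ∈ S, IsLatticePt x) ∧ Δ = convexHull ℝ (S : Set (Fin d → ℝ))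

/-- A canonical polytope: a lattice polytope whose unique interior lattice point
is the origin. -/
def IsCanonical (Δ : Set (Fin d → ℝ)) : Prop :=
  IsLatticePolytope Δ ∧ (0 : Fin d → ℝ) ∈ interior Δ ∧
    ∀ x ∈ interior Δ, IsLatticePt x → x = 0

/-- A good pair: `Δ₁ ⊆ Δ₂` with `Δ₁` and `Δ₂*` canonical. -/
def IsGoodPair (Δ₁ Δ₂ : Set (Fin d → ℝ)) : Prop :=
  Δ₁ ⊆ Δ₂ ∧ IsCanonical Δ₁ ∧ IsCanonical (polar Δ₂)

/-! ### Auxiliary lemmas -/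

lemma pairR_comm (x y : Fin d → ℝ) : pairR x y = pairR y x := by
  simp [pairR, mul_comm]

lemma pairR_smul_right (x y : Fin d → ℝ) (t : ℝ) : pairR x (t • y) = t * pairR x y := by
  simp [pairR, Finset.mul_sum]
  exact Finset.sum_congr rfl fun i _ => by ring

lemma pairR_sub_right (x y z : Fin d → ℝ) : pairR x (y - z) = pairR x y - pairR x z := by
  simp [pairR, mul_sub, Finset.sum_sub_distrib]

lemma pairR_self_nonneg (x : Fin d → ℝ) : 0 ≤ pairR x x :=
  Finset.sum_nonneg fun i _ => mul_self_nonneg _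

lemma pairR_self_pos {x : Fin d → ℝ} (hx : x ≠ 0) : 0 < pairR x x := by
  rcases (pairR_self_nonneg x).lt_or_eq with h | h
  · exact h
  · exfalso
    apply hx
    funext i
    have h1 := (Finset.sum_eq_zero_iff_of_nonneg (fun i _ => mul_self_nonneg (x i))).1 h.symm i
      (Finset.mem_univ i)
    have := mul_self_eq_zero.1 h1
    simpa using this

lemma isLinearMap_pairR_left (y : Fin d → ℝ) : IsLinearMap ℝ (fun x => pairR x y) := by
  constructor
  · intro a b; simp [pairR, add_mul, Finset.sum_add_distrib]
  · intro c a; simp [pairR, Finset.mul_sum]; exact Finset.sum_congr rfl fun i _ => by ring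

lemma abs_pairR_le (x y : Fin d → ℝ) : |pairR x y| ≤ (d : ℝ) * ‖x‖ * ‖y‖ := by
  calc |pairR x y| ≤ ∑ i, |x i * y i| := Finset.abs_sum_le_sum_abs _ _
    _ ≤ ∑ _i : Fin d, ‖x‖ * ‖y‖ := by
        apply Finset.sum_le_sum
        intro i _
        rw [abs_mul]
        have hx := norm_le_pi_norm x i
        have hy := norm_le_pi_norm y i
        simp only [Real.norm_eq_abs] at hx hy
        exact mul_le_mul hx hy (abs_nonneg _) (norm_nonneg _)
    _ = (d : ℝ) * ‖x‖ * ‖y‖ := by simp [Finset.sum_const, mul_assoc]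

/-- If every nonnegative multiple of `x` lies in a bounded set, then `x = 0`. -/
lemma eq_zero_of_ray_subset {K : Set (Fin d → ℝ)} (hK : Bornology.IsBounded K)
    {x : Fin d → ℝ} (hx : ∀ t : ℝ, 0 ≤ t → t • x ∈ K) : x = 0 := by
  by_contra hne
  obtain ⟨r, hr⟩ := (Metric.isBounded_iff_subset_closedBall 0).1 hK
  have hnx : 0 < ‖x‖ := norm_pos_iff.2 hne
  set t : ℝ := (|r| + 1) / ‖x‖ with ht
  have htpos : 0 ≤ t := div_nonneg (by positivity) hnx.le
  have hmem := hr (hx t htpos)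
  rw [Metric.mem_closedBall, dist_zero_right, norm_smul, Real.norm_eq_abs,
    abs_of_nonneg htpos, ht, div_mul_cancel₀ _ hnx.ne'] at hmem
  have : |r| + 1 ≤ |r| := hmem.trans (le_abs_self r)
  linarith

lemma pairR_int {x y : Fin d → ℝ} (hx : IsLatticePt x) (hy : IsLatticePt y) :
    ∃ n : ℤ, pairR x y = (n : ℝ) := by
  choose zx hzx using hx
  choose zy hzy using hy
  refine ⟨∑ i, zx i * zy i, ?_⟩
  rw [pairR]
  push_cast
  exact Finset.sum_congr rfl fun i _ => by rw [hzx i, hzy i]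

lemma int_nonneg_of_gt_neg_one {r : ℝ} (h : ∃ n : ℤ, r = (n : ℝ)) (hr : -1 < r) : 0 ≤ r := by
  obtain ⟨n, rfl⟩ := h
  have : (-1 : ℤ) < n := by exact_mod_cast hr
  exact_mod_cast this

/-- If `y` is interior to `K` and `pairR x · ≥ -1` on `K`, then `pairR x y > -1`. -/
lemma pair_gt_of_interior {K : Set (Fin d → ℝ)} {x y : Fin d → ℝ}
    (hy : y ∈ interior K) (h : ∀ z ∈ K, pairR x z ≥ -1) : -1 < pairR x y := by
  by_cases hx : x = 0
  · subst hx
    have : pairR 0 y = 0 := by simp [pairR]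
    rw [this]; norm_num
  · obtain ⟨ε, hε, hball⟩ := Metric.isOpen_iff.1 isOpen_interior y hy
    have hnx : 0 < ‖x‖ := norm_pos_iff.2 hx
    set c : ℝ := ε / (2 * ‖x‖) with hc
    have hcpos : 0 < c := by positivity
    have hz : y - c • x ∈ K := by
      apply interior_subset
      apply hball
      rw [Metric.mem_ball, dist_eq_norm]
      have heq : y - c • x - y = -(c • x) := by abel
      rw [heq, norm_neg, norm_smul, Real.norm_eq_abs, abs_of_pos hcpos, hc]
      rw [div_mul_eq_mul_div, mul_comm, mul_div_assoc]
      calc ‖x‖ * (ε / (2 * ‖x‖)) = ε / 2 := by field_simp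
        _ < ε := by linarith
    have h1 := h _ hz
    rw [pairR_sub_right, pairR_smul_right] at h1
    have h2 : 0 < c * pairR x x := mul_pos hcpos (pairR_self_pos hx)
    linarith [h1]

/-- Representation of a continuous linear functional via `pairR`. -/
lemma pairR_repr (f : (Fin d → ℝ) →L[ℝ] ℝ) (w : Fin d → ℝ) :
    pairR w (fun i => f (fun j => if i = j then 1 else 0)) = f w := by
  have := LinearMap.pi_apply_eq_sum_univ (f : (Fin d → ℝ) →ₗ[ℝ] ℝ) w
  simp only [ContinuousLinearMap.coe_coe] at this
  rw [pairR, this]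
  exact Finset.sum_congr rfl fun i _ => by simp [smul_eq_mul]

/-- Half of the bipolar theorem: for a closed convex set containing the origin,
the double polar is contained in the set. -/
lemma bipolar_subset {Δ : Set (Fin d → ℝ)} (hconv : Convex ℝ Δ) (hcl : IsClosed Δ)
    (h0 : (0 : Fin d → ℝ) ∈ Δ) : polar (polar Δ) ⊆ Δ := by
  intro z hz
  by_contra hzΔ
  obtain ⟨f, u, hfu, huz⟩ := geometric_hahn_banach_closed_point hconv hcl hzΔ
  have hu : 0 < u := by have := hfu 0 h0; simpa using this
  set y : Fin d → ℝ := fun i => (-1 / u) * f (fun j => if i = j then 1 else 0) with hy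
  have hrep : ∀ w : Fin d → ℝ, pairR w y = (-1 / u) * f w := by
    intro w
    have hpr := pairR_repr f w
    rw [hy]
    calc pairR w (fun i => -1 / u * f fun j => if i = j then 1 else 0)
        = ∑ i, w i * (-1 / u * f fun j => if i = j then 1 else 0) := rfl
      _ = (-1 / u) * ∑ i, w i * (f fun j => if i = j then 1 else 0) := by
          rw [Finset.mul_sum]; exact Finset.sum_congr rfl fun i _ => by ring
      _ = (-1 / u) * f w := by rw [← hpr]; rfl
  have hyP : y ∈ polar Δ := by
    intro a ha
    rw [ge_iff_le, hrep a]
    have h1 : f a < u := hfu a ha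
    have hneg : -1 / u < 0 := div_neg_of_neg_of_pos (by norm_num) hu
    have hmul : (-1 / u) * u = -1 := by field_simp
    have := mul_lt_mul_of_neg_left h1 hneg
    linarith
  have hfin := hz y hyP
  rw [ge_iff_le, pairR_comm, hrep z] at hfin
  have hneg : -1 / u < 0 := div_neg_of_neg_of_pos (by norm_num) hu
  have hmul : (-1 / u) * u = -1 := by field_simp
  have := mul_lt_mul_of_neg_left huz hneg
  linarith

/-- If `Δ` is bounded, then `0` is interior to `polar Δ`. -/
lemma zero_mem_interior_polar {Δ : Set (Fin d → ℝ)} (hb : Bornology.IsBounded Δ) :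
    (0 : Fin d → ℝ) ∈ interior (polar Δ) := by
  obtain ⟨r, hr⟩ := (Metric.isBounded_iff_subset_closedBall 0).1 hb
  set C : ℝ := (d : ℝ) * (|r| + 1) with hC
  have hC0 : 0 ≤ C := by positivity
  set ε : ℝ := 1 / (C + 1) with hε
  have hε0 : 0 < ε := by positivity
  have hball : Metric.ball (0 : Fin d → ℝ) ε ⊆ polar Δ := by
    intro y hyb x hx
    have hxn : ‖x‖ ≤ |r| + 1 := by
      have hxr := hr hx
      rw [Metric.mem_closedBall, dist_zero_right] at hxr
      calc ‖x‖ ≤ r := hxr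
        _ ≤ |r| := le_abs_self r
        _ ≤ |r| + 1 := by linarith
    have hyn : ‖y‖ < ε := by rwa [Metric.mem_ball, dist_zero_right] at hyb
    have h1 : |pairR x y| ≤ C * ‖y‖ := by
      calc |pairR x y| ≤ (d : ℝ) * ‖x‖ * ‖y‖ := abs_pairR_le x y
        _ ≤ C * ‖y‖ := by
            apply mul_le_mul_of_nonneg_right _ (norm_nonneg y)
            rw [hC]
            exact mul_le_mul_of_nonneg_left hxn (by positivity)
    have h2 : C * ‖y‖ < 1 := by
      calc C * ‖y‖ ≤ C * ε := mul_le_mul_of_nonneg_left hyn.le hC0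
        _ = C / (C + 1) := by rw [hε]; ring
        _ < 1 := by rw [div_lt_one (by linarith)]; linarith
    have habs := abs_lt.1 (h1.trans_lt h2)
    linarith [habs.1]
  exact interior_maximal hball Metric.isOpen_ball (Metric.mem_ball_self hε0)

/-- The main implication: if the polar of `Δ` is a lattice polytope, then
both `Δ` and `polar Δ` are canonical. -/
lemma canonical_of_reflexive (Δ : Set (Fin d → ℝ)) (hΔ : IsLatticePolytope Δ)
    (h0 : (0 : Fin d → ℝ) ∈ interior Δ) (hpol : IsLatticePolytope (polar Δ)) :
    IsCanonical Δ ∧ IsCanonical (polar Δ) := by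
  obtain ⟨S, hS, hΔeq⟩ := hΔ
  obtain ⟨S', hS', hPeq⟩ := hpol
  have hcomp : IsCompact Δ := hΔeq ▸ S.finite_toSet.isCompact_convexHull (𝕜 := ℝ)
  have hcomp' : IsCompact (polar Δ) := hPeq ▸ S'.finite_toSet.isCompact_convexHull (𝕜 := ℝ)
  have hconv : Convex ℝ Δ := hΔeq ▸ convex_convexHull ℝ _
  have hbd := hcomp.isBounded
  have hbd' := hcomp'.isBounded
  have h0Δ : (0 : Fin d → ℝ) ∈ Δ := interior_subset h0
  have hbip := bipolar_subset hconv hcomp.isClosed h0Δ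
  constructor
  · -- Δ is canonical
    refine ⟨⟨S, hS, hΔeq⟩, h0, ?_⟩
    intro x hxint hxlat
    have hS'0 : ∀ y ∈ (S' : Set (Fin d → ℝ)), y ∈ {y | 0 ≤ pairR y x} := by
      intro y hy
      have hyP : y ∈ polar Δ := hPeq ▸ subset_convexHull ℝ _ hy
      have hgt : -1 < pairR y x :=
        pair_gt_of_interior hxint (fun z hz => by rw [pairR_comm]; exact hyP z hz)
      exact int_nonneg_of_gt_neg_one (pairR_int (hS' y hy) hxlat) hgt
    have hall : ∀ y ∈ polar Δ, 0 ≤ pairR y x := by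
      intro y hy
      rw [hPeq] at hy
      exact convexHull_min hS'0 (convex_halfSpace_ge (isLinearMap_pairR_left x) 0) hy
    have hray : ∀ t : ℝ, 0 ≤ t → t • x ∈ Δ := by
      intro t ht
      apply hbip
      intro y hy
      rw [ge_iff_le, pairR_smul_right]
      have := mul_nonneg ht (hall y hy)
      linarith
    exact eq_zero_of_ray_subset hbd hray
  · -- polar Δ is canonical
    refine ⟨⟨S', hS', hPeq⟩, zero_mem_interior_polar hbd, ?_⟩
    intro y hyint hylat
    have hS0 : ∀ x ∈ (S : Set (Fin d → ℝ)), x ∈ {x | 0 ≤ pairR x y} := by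
      intro x hx
      have hxΔ : x ∈ Δ := hΔeq ▸ subset_convexHull ℝ _ hx
      have hgt : -1 < pairR x y :=
        pair_gt_of_interior hyint (fun z hz => hz x hxΔ)
      exact int_nonneg_of_gt_neg_one (pairR_int (hS x hx) hylat) hgt
    have hall : ∀ x ∈ Δ, 0 ≤ pairR x y := by
      intro x hx
      rw [hΔeq] at hx
      exact convexHull_min hS0 (convex_halfSpace_ge (isLinearMap_pairR_left y) 0) hx
    have hray : ∀ t : ℝ, 0 ≤ t → t • y ∈ polar Δ := by
      intro t ht x hx
      rw [ge_iff_le, pairR_smul_right]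
      have := mul_nonneg ht (hall x hx)
      linarith
    exact eq_zero_of_ray_subset hbd' hray

/-- A lattice polytope `Δ` with `0` in its interior is reflexive
iff both `Δ` and `Δ*` are canonical; equivalently, iff `(Δ, Δ)` is a good pair. -/
theorem stmt6 (Δ : Set (Fin d → ℝ)) (hΔ : IsLatticePolytope Δ)
    (h0 : (0 : Fin d → ℝ) ∈ interior Δ) :
    (IsLatticePolytope (polar Δ) ↔ IsCanonical Δ ∧ IsCanonical (polar Δ)) ∧
    (IsLatticePolytope (polar Δ) ↔ IsGoodPair Δ Δ) := by
  have key : IsLatticePolytope (polar Δ) ↔ IsCanonical Δ ∧ IsCanonical (polar Δ) := by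
    constructor
    · exact canonical_of_reflexive Δ hΔ h0
    · exact fun h => h.2.1
  refine ⟨key, key.trans ?_⟩
  constructor
  · exact fun h => ⟨subset_rfl, h.1, h.2⟩
  · exact fun h => ⟨h.2.1, h.2.2⟩
end
end

section
/- Let (Δ₁, Δ₂) be a good pair of polytopes in M_ℚ and let M' ⊆ M be a finite-index sublattice such that all vertices of Δ₁ lie in M'. Then (Δ₁, Δ₂) is a good pair with respect to the lattice M' (with polar taken in the dual lattice N' ⊇ N). -/
open Finset

variable {d : ℕ}

noncomputable section

/-- The dual lattice of a subset `L ⊆ ℝ^d`: vectors pairing integrally with `L`. -/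
def dualLattice (L : Set (Fin d → ℝ)) : Set (Fin d → ℝ) :=
  {y | ∀ x ∈ L, ∃ z : ℤ, pairR x y = (z : ℝ)}

/-- A polytope with vertices in the sub"lattice" `L`. -/
def IsLatticePolytopeIn (L Δ : Set (Fin d → ℝ)) : Prop :=
  ∃ S : Finset (Fin d → ℝ), (S : Set (Fin d → ℝ)) ⊆ L ∧
    Δ = convexHull ℝ (S : Set (Fin d → ℝ))

/-- Canonical with respect to the lattice `L`. -/
def IsCanonicalIn (L Δ : Set (Fin d → ℝ)) : Prop :=
  IsLatticePolytopeIn L Δ ∧ (0 : Fin d → ℝ) ∈ interior Δ ∧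
    ∀ x ∈ interior Δ, x ∈ L → x = 0

/-- Good pair with respect to a lattice `L` and its dual lattice `Ldual`. -/
def IsGoodPairIn (L Ldual Δ₁ Δ₂ : Set (Fin d → ℝ)) : Prop :=
  Δ₁ ⊆ Δ₂ ∧ IsCanonicalIn L Δ₁ ∧ IsCanonicalIn Ldual (polar Δ₂)

/-- The standard lattice `ℤ^d ⊆ ℝ^d` as a set. -/
def stdLattice (d : ℕ) : Set (Fin d → ℝ) := {x | ∀ i, ∃ z : ℤ, x i = (z : ℝ)}

lemma pairR_right_add (x y z : Fin d → ℝ) : pairR x (y + z) = pairR x y + pairR x z := by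
  simp [pairR, mul_add, Finset.sum_add_distrib]

lemma pairR_right_smul (c : ℝ) (x y : Fin d → ℝ) : pairR x (c • y) = c * pairR x y := by
  simp [pairR, Finset.mul_sum, mul_left_comm]

lemma eq_zero_of_pairR_self_nonpos {x : Fin d → ℝ} (h : pairR x x ≤ 0) : x = 0 := by
  have h0 : pairR x x = 0 := le_antisymm h (pairR_self_nonneg x)
  funext i
  have := (Finset.sum_eq_zero_iff_of_nonneg (fun i _ => mul_self_nonneg (x i))).1 h0 i
    (Finset.mem_univ i)
  simpa [mul_self_eq_zero] using this

lemma exists_pos_smul_mem {K : Set (Fin d → ℝ)} {y w : Fin d → ℝ} (hy : y ∈ interior K) :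
    ∃ t : ℝ, 0 < t ∧ y + t • w ∈ K := by
  have hc : Continuous (fun t : ℝ => y + t • w) := by continuity
  have hmem : (fun t : ℝ => y + t • w) ⁻¹' interior K ∈ nhds (0 : ℝ) :=
    hc.continuousAt.preimage_mem_nhds (isOpen_interior.mem_nhds (by simpa using hy))
  obtain ⟨ε, hε, h⟩ := Metric.mem_nhds_iff.1 hmem
  refine ⟨ε / 2, by positivity, interior_subset (h ?_)⟩
  simp only [Metric.mem_ball, Real.dist_eq, sub_zero]
  rw [abs_of_pos (by positivity)]
  linarith

lemma polar_anti {A B : Set (Fin d → ℝ)} (h : A ⊆ B) : polar B ⊆ polar A :=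
  fun y hy x hx => hy x (h hx)

lemma std_subset_dual {L' : Set (Fin d → ℝ)} (hsub : L' ⊆ stdLattice d) :
    stdLattice d ⊆ dualLattice L' := by
  intro y hy x hx
  choose a ha using hsub hx
  choose b hb using hy
  exact ⟨∑ i, a i * b i, by simp [pairR, ha, hb]⟩

/-- A good pair `(Δ₁, Δ₂)` over `M` remains a good pair over a
finite-index sublattice `M' ⊆ M` whose points contain the vertices of `Δ₁`,
with the polar taken with respect to the dual lattice `N' ⊇ N`. -/
theorem stmt7 (Δ₁ Δ₂ : Set (Fin d → ℝ)) (L' : Set (Fin d → ℝ))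
    (hsub : L' ⊆ stdLattice d)
    (hsubgrp : ∃ H : AddSubgroup (Fin d → ℝ), (H : Set (Fin d → ℝ)) = L')
    (hfin : ∀ x ∈ stdLattice d, ∃ k : ℕ, 0 < k ∧ (k : ℝ) • x ∈ L')
    (hgood : IsGoodPairIn (stdLattice d) (stdLattice d) Δ₁ Δ₂)
    (hvert : IsLatticePolytopeIn L' Δ₁) :
    IsGoodPairIn L' (dualLattice L') Δ₁ Δ₂ := by
  obtain ⟨h12, ⟨hpoly1, h01, hcan1⟩, ⟨hpolyP, h0P, hcanP⟩⟩ := hgood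
  refine ⟨h12, ⟨hvert, h01, fun x hx hxL => hcan1 x hx (hsub hxL)⟩, ?_, h0P, ?_⟩
  · obtain ⟨S, hS, hEq⟩ := hpolyP
    exact ⟨S, fun y hy => std_subset_dual hsub (hS hy), hEq⟩
  · intro y hy hydual
    obtain ⟨S, hSL, hΔ1⟩ := hvert
    have hyint1 : y ∈ interior (polar Δ₁) := interior_mono (polar_anti h12) hy
    have hypol1 : y ∈ polar Δ₁ := interior_subset hyint1
    -- each vertex pairs nonnegatively with y
    have hvpos : ∀ v ∈ (S : Set (Fin d → ℝ)), 0 ≤ pairR v y := by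
      intro v hv
      obtain ⟨z, hz⟩ := hydual v (hSL hv)
      have hvΔ : v ∈ Δ₁ := hΔ1 ▸ subset_convexHull ℝ _ hv
      have hge : pairR v y ≥ -1 := hypol1 v hvΔ
      have hzge : (-1 : ℤ) ≤ z := by exact_mod_cast hz ▸ hge
      rcases eq_or_lt_of_le hzge with hzeq | hzlt
      · exfalso
        obtain ⟨t, ht, hmem⟩ := exists_pos_smul_mem (w := -v) hyint1
        have h2 : pairR v (y + t • (-v)) ≥ -1 := hmem v hvΔ
        rw [pairR_right_add, pairR_right_smul, hz, ← hzeq] at h2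
        have hvv : pairR v (-v) = -pairR v v := by simp [pairR, mul_comm]
        rw [hvv] at h2
        have hle : pairR v v ≤ 0 := by
          push_cast at h2
          nlinarith [pairR_self_nonneg v]
        have hv0 : v = 0 := eq_zero_of_pairR_self_nonpos hle
        rw [hv0] at hz
        simp [pairR, ← hzeq] at hz
      · rw [hz]
        exact_mod_cast by omega
    -- hence all of Δ₁ pairs nonnegatively with y
    have hconv : Convex ℝ {x : Fin d → ℝ | 0 ≤ pairR x y} := by
      have hlin : IsLinearMap ℝ (fun x : Fin d → ℝ => pairR x y) :=
        ⟨fun a b => by simp [pairR, add_mul, Finset.sum_add_distrib],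
         fun c x => by simp [pairR, Finset.mul_sum, mul_assoc]⟩
      simpa using convex_halfSpace_ge hlin 0
    have hΔpos : ∀ x ∈ Δ₁, 0 ≤ pairR x y := by
      intro x hx
      rw [hΔ1] at hx
      exact convexHull_min hvpos hconv hx
    obtain ⟨t, ht, hmem⟩ := exists_pos_smul_mem (w := -y) h01
    have h3 : 0 ≤ pairR ((0 : Fin d → ℝ) + t • (-y)) y := hΔpos _ hmem
    rw [pairR_comm, pairR_right_add, pairR_right_smul] at h3
    have hyy : pairR y (-y) = -pairR y y := by simp [pairR, mul_comm]
    have h0y : pairR y (0 : Fin d → ℝ) = 0 := by simp [pairR]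
    rw [hyy, h0y] at h3
    exact eq_zero_of_pairR_self_nonpos (by nlinarith)
end
end
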